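/- Let y₀ ∈ ℝ, b > 0, ε > 0, and let p : ℝ → ℝ be continuous, strictly positive, strictly decreasing and strictly convex on [y₀, ∞). Suppose Y ≥ y₀ satisfies ∫_{y₀}^{Y} p(y) dy = b. If h > 0 and natural numbers n₁ < n₂ with n₁ ≥ 1 satisfy S_t(h,n₁) ≤ b ≤ S_l(h,n₂) and h·(n₂ − n₁) ≤ ε, then the midpoint approximation satisfies |Y − (y₀ + (h/2)·(n₁ + n₂))| < ε/2, and moreover |Y − (y₀ + h·n₁)| < ε and |Y − (y₀ + h·n₂)| < ε. -/

import Mathlib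

open Set Finset

/-- Lower rectangular sum: S_l(h,N) = ∑_{i=1}^{N} h·p(y₀ + i·h). -/
noncomputable def lowerSum (p : ℝ → ℝ) (y₀ h : ℝ) (N : ℕ) : ℝ :=
  ∑ i ∈ Finset.Icc 1 N, h * p (y₀ + (i : ℝ) * h)

/-- Trapezoidal sum: S_t(h,N) = ∑_{i=1}^{N} (h/2)·(p(y₀+(i−1)·h) + p(y₀+i·h)). -/
noncomputable def trapSum (p : ℝ → ℝ) (y₀ h : ℝ) (N : ℕ) : ℝ :=
  ∑ i ∈ Finset.Icc 1 N, (h / 2) * (p (y₀ + ((i : ℝ) - 1) * h) + p (y₀ + (i : ℝ) * h))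

/-- Integral of an affine function over an interval of length h. -/
lemma chord_integral (c m a h : ℝ) :
    (∫ y in a..(a + h), (c + m * (y - a))) = h * c + m * h ^ 2 / 2 := by
  have h1 : (∫ y in a..(a + h), (fun y => c + m * y) (y - a))
      = ∫ y in (a - a)..(a + h - a), (c + m * y) :=
    intervalIntegral.integral_comp_sub_right (fun y => c + m * y) a
  simp only [sub_self, add_sub_cancel_left] at h1
  rw [show (∫ y in a..(a + h), (c + m * (y - a)))
      = ∫ y in a..(a + h), (fun y => c + m * y) (y - a) from rfl, h1]
  have h2 : (∫ y in (0:ℝ)..h, (c + m * y))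
      = (∫ y in (0:ℝ)..h, (c:ℝ)) + ∫ y in (0:ℝ)..h, m * y := by
    exact intervalIntegral.integral_add intervalIntegrable_const
      ((continuous_const.mul continuous_id).intervalIntegrable _ _)
  rw [h2, intervalIntegral.integral_const, intervalIntegral.integral_const_mul,
    integral_id, smul_eq_mul]
  ring

section helpers

variable {p : ℝ → ℝ} {y₀ : ℝ}

lemma intInt (hc : ContinuousOn p (Set.Ici y₀)) {c d : ℝ} (hcy : y₀ ≤ c) (hdy : y₀ ≤ d) :
    IntervalIntegrable p MeasureTheory.volume c d := by
  refine (hc.mono ?_).intervalIntegrable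
  intro x hx
  exact le_trans (le_min hcy hdy) hx.1

/-- A single trapezoid strictly overestimates the integral of a strictly convex function. -/
lemma trap_single (hc : ContinuousOn p (Set.Ici y₀))
    (hconv : StrictConvexOn ℝ (Set.Ici y₀) p)
    {a h : ℝ} (ha : y₀ ≤ a) (hh : 0 < h) :
    (∫ y in a..(a + h), p y) < h / 2 * (p a + p (a + h)) := by
  set g : ℝ → ℝ := fun y => p a + (p (a + h) - p a) / h * (y - a) with hg
  have hmem : ∀ y, a ≤ y → y ∈ Set.Ici y₀ := fun y hy => le_trans ha hy
  have key : (∫ y in a..(a + h), p y) < ∫ y in a..(a + h), g y := by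
    apply intervalIntegral.integral_lt_integral_of_continuousOn_of_le_of_exists_lt
      (by linarith)
    · exact hc.mono (fun x hx => hmem x hx.1)
    · exact ((continuous_const.add ((continuous_const.mul
        (continuous_id.sub continuous_const)))).continuousOn)
    · -- p ≤ g on Ioc a (a+h)
      intro x hx
      obtain ⟨hx1, hx2⟩ := hx
      rcases eq_or_lt_of_le hx2 with he | hlt
      · have hgx : g x = p x := by
          rw [he]; simp only [g, add_sub_cancel_left, div_mul_cancel₀ _ hh.ne']; ring
        linarith [hgx]
      · have ht1 : (0:ℝ) < (a + h - x) / h := by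
          apply div_pos; linarith; exact hh
        have ht2 : (0:ℝ) < (x - a) / h := by
          apply div_pos; linarith; exact hh
        have hsum : (a + h - x) / h + (x - a) / h = 1 := by
          field_simp; ring
        have hxe : ((a + h - x) / h) • a + ((x - a) / h) • (a + h) = x := by
          simp only [smul_eq_mul]; field_simp; ring
        have := hconv.2 (Set.mem_Ici.mpr ha) (hmem (a + h) (by linarith))
          (by intro hcon; linarith) ht1 ht2 hsum
        rw [hxe] at this
        have : p x < (a + h - x) / h * p a + (x - a) / h * p (a + h) := this
        have hgx : g x = (a + h - x) / h * p a + (x - a) / h * p (a + h) := by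
          simp only [g]; field_simp; ring
        linarith [hgx ▸ this.le]
    · -- strict at midpoint
      refine ⟨a + h / 2, ⟨by linarith, by linarith⟩, ?_⟩
      have ht1 : (0:ℝ) < (a + h - (a + h / 2)) / h := by
        apply div_pos; linarith; exact hh
      have ht2 : (0:ℝ) < ((a + h / 2) - a) / h := by
        apply div_pos; linarith; exact hh
      have hsum : (a + h - (a + h / 2)) / h + ((a + h / 2) - a) / h = 1 := by
        field_simp; ring
      have hxe : ((a + h - (a + h / 2)) / h) • a
          + (((a + h / 2) - a) / h) • (a + h) = a + h / 2 := by
        simp only [smul_eq_mul]; field_simp; ring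
      have := hconv.2 (Set.mem_Ici.mpr ha) (hmem (a + h) (by linarith))
        (by intro hcon; linarith) ht1 ht2 hsum
      rw [hxe] at this
      simp only [smul_eq_mul] at this
      have hgx : g (a + h / 2) = (a + h - (a + h / 2)) / h * p a
          + ((a + h / 2) - a) / h * p (a + h) := by
        simp only [g]; field_simp; ring
      linarith
  have hgi : (∫ y in a..(a + h), g y) = h / 2 * (p a + p (a + h)) := by
    have := chord_integral (p a) ((p (a + h) - p a) / h) a h
    rw [hg, this]
    field_simp
    ring
  linarith

/-- A single right-endpoint rectangle strictly underestimates the integral. -/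
lemma rect_single (hc : ContinuousOn p (Set.Ici y₀))
    (hanti : StrictAntiOn p (Set.Ici y₀))
    {a h : ℝ} (ha : y₀ ≤ a) (hh : 0 < h) :
    h * p (a + h) < ∫ y in a..(a + h), p y := by
  have hmem : ∀ y, a ≤ y → y ∈ Set.Ici y₀ := fun y hy => le_trans ha hy
  have key : (∫ y in a..(a + h), (fun _ => p (a + h)) y) < ∫ y in a..(a + h), p y := by
    apply intervalIntegral.integral_lt_integral_of_continuousOn_of_le_of_exists_lt
      (by linarith)
    · exact continuousOn_const
    · exact hc.mono (fun x hx => hmem x hx.1)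
    · intro x hx
      rcases eq_or_lt_of_le hx.2 with he | hlt
      · rw [he]
      · exact (hanti (hmem x (le_of_lt hx.1)) (hmem (a + h) (by linarith)) hlt).le
    · exact ⟨a, ⟨le_refl a, by linarith⟩,
        hanti (hmem a le_rfl) (hmem (a + h) (by linarith)) (by linarith)⟩
  simpa using key

/-- Decompose the integral over [y₀, y₀+N·h] into subintervals. -/
lemma integral_split (hc : ContinuousOn p (Set.Ici y₀)) {h : ℝ} (hh : 0 < h) (N : ℕ) :
    (∫ y in y₀..(y₀ + (N : ℝ) * h), p y)
      = ∑ i ∈ Finset.Icc 1 N, ∫ y in (y₀ + ((i : ℝ) - 1) * h)..(y₀ + (i : ℝ) * h), p y := by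
  induction N with
  | zero => simp
  | succ N ih =>
    have hmem : ∀ k : ℕ, y₀ ≤ y₀ + (k : ℝ) * h := fun k => by
      nlinarith [Nat.cast_nonneg (α := ℝ) k]
    rw [Finset.sum_Icc_succ_top (by omega : 1 ≤ N + 1), ← ih]
    push_cast
    rw [← intervalIntegral.integral_add_adjacent_intervals
      (intInt hc le_rfl (hmem N))
      (by
        have := intInt hc (hmem N) (hmem (N + 1))
        push_cast at this ⊢
        convert this using 2 <;> ring)]
    norm_num

end helpers

theorem stmt_3 (y₀ b ε : ℝ) (hb : 0 < b) (hε : 0 < ε) (p : ℝ → ℝ)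
    (hc : ContinuousOn p (Set.Ici y₀))
    (hpos : ∀ y ∈ Set.Ici y₀, 0 < p y)
    (hanti : StrictAntiOn p (Set.Ici y₀))
    (hconv : StrictConvexOn ℝ (Set.Ici y₀) p)
    (Y : ℝ) (hY : y₀ ≤ Y) (hint : (∫ y in y₀..Y, p y) = b)
    (h : ℝ) (hh : 0 < h) (n₁ n₂ : ℕ) (hn₁ : 1 ≤ n₁) (hlt : n₁ < n₂)
    (ht : trapSum p y₀ h n₁ ≤ b) (hl : b ≤ lowerSum p y₀ h n₂)
    (hgap : h * ((n₂ : ℝ) - (n₁ : ℝ)) ≤ ε) :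
    |Y - (y₀ + (h / 2) * ((n₁ : ℝ) + (n₂ : ℝ)))| < ε / 2 ∧
      |Y - (y₀ + h * (n₁ : ℝ))| < ε ∧ |Y - (y₀ + h * (n₂ : ℝ))| < ε := by
  have hmem : ∀ k : ℕ, y₀ ≤ y₀ + (k : ℝ) * h := fun k => by
    nlinarith [Nat.cast_nonneg (α := ℝ) k]
  have hstep : ∀ i : ℕ, 1 ≤ i → y₀ ≤ y₀ + ((i : ℝ) - 1) * h := by
    intro i hi
    have : (1 : ℝ) ≤ (i : ℝ) := by exact_mod_cast hi
    nlinarith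
  have hform : ∀ i : ℕ, y₀ + (i : ℝ) * h = (y₀ + ((i : ℝ) - 1) * h) + h := by
    intro i; ring
  -- integral over [y₀, y₀+n₁h] < trapSum n₁
  have hI1 : (∫ y in y₀..(y₀ + (n₁ : ℝ) * h), p y) < trapSum p y₀ h n₁ := by
    rw [integral_split hc hh n₁, trapSum]
    apply Finset.sum_lt_sum_of_nonempty
    · exact Finset.nonempty_Icc.mpr hn₁
    · intro i hi
      have hi1 : 1 ≤ i := (Finset.mem_Icc.mp hi).1
      have := trap_single hc hconv (hstep i hi1) hh
      rw [hform i]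
      convert this using 3 <;> ring
  -- lowerSum n₂ < integral over [y₀, y₀+n₂h]
  have hI2 : lowerSum p y₀ h n₂ < ∫ y in y₀..(y₀ + (n₂ : ℝ) * h), p y := by
    rw [integral_split hc hh n₂, lowerSum]
    apply Finset.sum_lt_sum_of_nonempty
    · exact Finset.nonempty_Icc.mpr (by omega)
    · intro i hi
      have hi1 : 1 ≤ i := (Finset.mem_Icc.mp hi).1
      have := rect_single hc hanti (hstep i hi1) hh
      rw [hform i]
      convert this using 2 <;> ring
  -- monotonicity: y₀ ≤ u ≤ v → F u ≤ F v
  have hmono : ∀ u v : ℝ, y₀ ≤ u → u ≤ v →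
      (∫ y in y₀..u, p y) ≤ ∫ y in y₀..v, p y := by
    intro u v hu huv
    have hv : y₀ ≤ v := le_trans hu huv
    rw [← intervalIntegral.integral_add_adjacent_intervals
      (intInt hc le_rfl hu) (intInt hc hu hv)]
    have : 0 ≤ ∫ y in u..v, p y := by
      apply intervalIntegral.integral_nonneg huv
      intro x hx
      exact (hpos x (le_trans hu hx.1)).le
    linarith
  -- Y > y₀ + n₁h
  have hYlow : y₀ + (n₁ : ℝ) * h < Y := by
    by_contra hcon
    push_neg at hcon
    have := hmono Y (y₀ + (n₁ : ℝ) * h) hY hcon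
    rw [hint] at this
    linarith
  -- Y < y₀ + n₂h
  have hYhigh : Y < y₀ + (n₂ : ℝ) * h := by
    by_contra hcon
    push_neg at hcon
    have := hmono (y₀ + (n₂ : ℝ) * h) Y (hmem n₂) hcon
    rw [hint] at this
    linarith
  refine ⟨?_, ?_, ?_⟩ <;> rw [abs_lt] <;> constructor <;> linarith
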